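/- Let X be a finite group with an abelian Sylow p-subgroup P. If R is a subgroup of P and x ∈ X satisfies R^x ⊆ P, then there exists y ∈ N_X(P) such that u^x = u^y for all u ∈ R (Burnside fusion argument for abelian Sylow subgroups). -/

import Mathlib

open Subgroup MulAction

/-- Burnside fusion argument for abelian Sylow subgroups: if `P` is an abelian Sylow
`p`-subgroup of a finite group `X`, `R ≤ P` and `x ∈ X` satisfies `R^x ⊆ P`, then there is
`y ∈ N_X(P)` with `u^x = u^y` for all `u ∈ R`. -/
theorem stmt_7 {p : ℕ} [Fact p.Prime] {X : Type*} [Group X] [Finite X]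
    (P : Sylow p X) (hab : ∀ a b : X, a ∈ P → b ∈ P → a * b = b * a)
    (R : Subgroup X) (hR : R ≤ (P : Subgroup X)) (x : X)
    (hx : ∀ u ∈ R, x⁻¹ * u * x ∈ (P : Subgroup X)) :
    ∃ y ∈ Subgroup.normalizer ((P : Subgroup X) : Set X), ∀ u ∈ R, x⁻¹ * u * x = y⁻¹ * u * y := by
  set S : Set X := (fun u => x⁻¹ * u * x) '' (R : Set X) with hS
  have h1 : (P : Subgroup X) ≤ centralizer S := by
    intro g hg
    rw [mem_centralizer_iff]
    rintro - ⟨u, hu, rfl⟩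
    exact hab _ g (hx u hu) hg
  have h2 : ↑(x⁻¹ • P) ≤ centralizer S := by
    intro g hg
    rw [Sylow.smul_def, Sylow.pointwise_smul_def, Subgroup.mem_pointwise_smul_iff_inv_smul_mem] at hg
    have hq : x * g * x⁻¹ ∈ P := by
      exact (by simpa [MulAut.smul_def, MulAut.conj_apply, mul_assoc] using hg : x * g * x⁻¹ ∈ (P : Subgroup X))
    rw [mem_centralizer_iff]
    rintro - ⟨u, hu, rfl⟩
    have h := hab u (x * g * x⁻¹) (hR hu) hq
    have key : x⁻¹ * (u * (x * g * x⁻¹)) * x = x⁻¹ * ((x * g * x⁻¹) * u) * x := by rw [h]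
    calc x⁻¹ * u * x * g = x⁻¹ * (u * (x * g * x⁻¹)) * x := by group
      _ = x⁻¹ * ((x * g * x⁻¹) * u) * x := key
      _ = g * (x⁻¹ * u * x) := by group
  obtain ⟨h, hh⟩ :=
    exists_smul_eq (centralizer S) ((x⁻¹ • P).subtype h2) (P.subtype h1)
  simp_rw [Sylow.smul_subtype, Subgroup.smul_def, smul_smul] at hh
  have hnorm : (↑h * x⁻¹) • P = P := Sylow.subtype_injective hh
  have hmem : (↑h * x⁻¹ : X) ∈ Subgroup.normalizer ((P : Subgroup X) : Set X) :=
    Sylow.smul_eq_iff_mem_normalizer.mp hnorm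
  refine ⟨x * (↑h)⁻¹, ?_, ?_⟩
  · have := (Subgroup.normalizer ((P : Subgroup X) : Set X)).inv_mem hmem
    simpa using this
  · intro u hu
    have hc : (x⁻¹ * u * x) * ↑h = ↑h * (x⁻¹ * u * x) :=
      (mem_centralizer_iff.mp h.2) _ ⟨u, hu, rfl⟩
    have : (x * (↑h)⁻¹)⁻¹ * u * (x * (↑h)⁻¹) = ↑h * (x⁻¹ * u * x) * (↑h)⁻¹ := by group
    rw [this, ← hc]
    group
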